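/- Let ABC be a triangle with all angles less than 120°, and erect equilateral triangles ARB, BPC, ACQ externally on its sides. Then the three lines AP, BQ, CR are concurrent, meeting at the Fermat point M of ABC. -/

import Mathlib

open EuclideanGeometry RealInnerProductSpace

set_option maxHeartbeats 1000000 in
lemma fermat_aux (M A B C P : EuclideanSpace ℝ (Fin 2))
    (h1 : ∠ A M B = 2 * Real.pi / 3) (h2 : ∠ B M C = 2 * Real.pi / 3)
    (h3 : ∠ C M A = 2 * Real.pi / 3)
    (hP1 : dist B P = dist B C) (hP2 : dist C P = dist B C)
    (hPs : (affineSpan ℝ ({B, C} : Set (EuclideanSpace ℝ (Fin 2)))).SOppSide P A) :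
    M ∈ affineSpan ℝ ({A, P} : Set (EuclideanSpace ℝ (Fin 2))) := by
  have hpi := Real.pi_pos
  have hcos : Real.cos (2 * Real.pi / 3) = -(1/2) := by
    rw [show (2 * Real.pi / 3) = Real.pi - Real.pi / 3 by ring, Real.cos_pi_sub,
      Real.cos_pi_div_three]
  have key : ∀ X Y : EuclideanSpace ℝ (Fin 2), ∠ X M Y = 2 * Real.pi / 3 →
      X - M ≠ 0 ∧ Y - M ≠ 0 ∧
      ⟪X - M, Y - M⟫ = -(‖X - M‖ * ‖Y - M‖) / 2 := by
    intro X Y h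
    have hXY : InnerProductGeometry.angle (X - M) (Y - M) = 2 * Real.pi / 3 := by
      rw [EuclideanGeometry.angle, vsub_eq_sub, vsub_eq_sub] at h
      exact h
    have hX : X - M ≠ 0 := by
      intro h0
      rw [h0, InnerProductGeometry.angle_zero_left] at hXY
      linarith
    have hY : Y - M ≠ 0 := by
      intro h0
      rw [h0, InnerProductGeometry.angle_zero_right] at hXY
      linarith
    refine ⟨hX, hY, ?_⟩
    have hc := InnerProductGeometry.cos_angle (X - M) (Y - M)
    rw [hXY, hcos] at hc
    have hnX : 0 < ‖X - M‖ := norm_pos_iff.2 hX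
    have hnY : 0 < ‖Y - M‖ := norm_pos_iff.2 hY
    rw [eq_div_iff (by positivity : ‖X - M‖ * ‖Y - M‖ ≠ 0)] at hc
    linarith
  obtain ⟨hA0, hB0, hAB⟩ := key A B h1
  obtain ⟨_, hC0, hBC⟩ := key B C h2
  obtain ⟨_, _, hCA⟩ := key C A h3
  set a := ‖A - M‖ with ha_def
  set b := ‖B - M‖ with hb_def
  set c := ‖C - M‖ with hc_def
  have ha : 0 < a := norm_pos_iff.2 hA0
  have hb : 0 < b := norm_pos_iff.2 hB0
  have hc : 0 < c := norm_pos_iff.2 hC0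
  set u : EuclideanSpace ℝ (Fin 2) := a⁻¹ • (A - M) with hu_def
  set v : EuclideanSpace ℝ (Fin 2) := b⁻¹ • (B - M) with hv_def
  set w : EuclideanSpace ℝ (Fin 2) := c⁻¹ • (C - M) with hw_def
  have huu : ⟪u, u⟫ = 1 := by
    rw [hu_def, real_inner_smul_left, real_inner_smul_right, real_inner_self_eq_norm_sq,
      ← ha_def]
    field_simp
  have hvv : ⟪v, v⟫ = 1 := by
    rw [hv_def, real_inner_smul_left, real_inner_smul_right, real_inner_self_eq_norm_sq,
      ← hb_def]
    field_simp
  have hww : ⟪w, w⟫ = 1 := by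
    rw [hw_def, real_inner_smul_left, real_inner_smul_right, real_inner_self_eq_norm_sq,
      ← hc_def]
    field_simp
  have huv : ⟪u, v⟫ = -(1/2) := by
    rw [hu_def, hv_def, real_inner_smul_left, real_inner_smul_right, hAB]
    field_simp
  have hvw : ⟪v, w⟫ = -(1/2) := by
    rw [hv_def, hw_def, real_inner_smul_left, real_inner_smul_right, hBC]
    field_simp
  have hwu : ⟪w, u⟫ = -(1/2) := by
    rw [hw_def, hu_def, real_inner_smul_left, real_inner_smul_right, hCA]
    field_simp
  have hvu : ⟪v, u⟫ = -(1/2) := by rw [real_inner_comm]; exact huv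
  have hwv : ⟪w, v⟫ = -(1/2) := by rw [real_inner_comm]; exact hvw
  have huw : ⟪u, w⟫ = -(1/2) := by rw [real_inner_comm]; exact hwu
  -- u + v + w = 0
  have hsum : u + v + w = 0 := by
    have h0 : ⟪u + v + w, u + v + w⟫ = 0 := by
      simp only [inner_add_left, inner_add_right, huu, hvv, hww, huv, hvw, hwu, hvu, hwv, huw]
      ring
    exact inner_self_eq_zero.1 h0
  set s : ℝ := Real.sqrt 3 with hs_def
  have hs : s ^ 2 = 3 := Real.sq_sqrt (by norm_num)
  have hs0 : 0 < s := Real.sqrt_pos.2 (by norm_num)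
  set f : EuclideanSpace ℝ (Fin 2) := s⁻¹ • (u + (2:ℝ) • v) with hf_def
  have hff : ⟪f, f⟫ = 1 := by
    rw [hf_def]
    rw [real_inner_smul_left, real_inner_smul_right]
    simp only [inner_add_left, inner_add_right, real_inner_smul_left, real_inner_smul_right,
      huu, hvv, huv, hvu]
    rw [show s⁻¹ * (s⁻¹ * (1 + 2 * -(1/2) + (2 * -(1/2) + 2 * (2 * 1)))) = 3 / s^2 by ring, hs]
    norm_num
  have huf : ⟪u, f⟫ = 0 := by
    rw [hf_def]
    simp only [inner_add_right, real_inner_smul_right, huu, huv]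
    ring
  have hfu : ⟪f, u⟫ = 0 := by rw [real_inner_comm]; exact huf
  -- coordinates of the three vertices
  have hvBM : B - M = (s * b / 2) • f - (b / 2) • u := by
    have hb' : b • v = B - M := by rw [hv_def, smul_smul, mul_inv_cancel₀ (ne_of_gt hb), one_smul]
    rw [← hb', hf_def]
    match_scalars <;> field_simp <;> ring
  have hwCM : C - M = -((c / 2) • u) - (s * c / 2) • f := by
    have hc' : c • w = C - M := by rw [hw_def, smul_smul, mul_inv_cancel₀ (ne_of_gt hc), one_smul]
    have hwv : w = -u - v := by
      have := hsum
      rw [show u + v + w = w - (-u - v) by abel] at this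
      rw [sub_eq_zero] at this
      exact this
    rw [← hc', hwv, hf_def]
    match_scalars <;> field_simp <;> ring
  have huAM : A - M = a • u := by
    rw [hu_def, smul_smul, mul_inv_cancel₀ (ne_of_gt ha), one_smul]
  -- P - M lies in the span of u and f
  obtain ⟨x, y, hxy⟩ : ∃ x y : ℝ, P - M = x • u + y • f := by
    have hon : Orthonormal ℝ ![u, f] := by
      have hu1 : ‖u‖ = 1 := by
        rw [← sq_eq_sq₀ (norm_nonneg _) zero_le_one, one_pow, ← real_inner_self_eq_norm_sq, huu]
      have hf1 : ‖f‖ = 1 := by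
        rw [← sq_eq_sq₀ (norm_nonneg _) zero_le_one, one_pow, ← real_inner_self_eq_norm_sq, hff]
      rw [orthonormal_iff_ite]
      intro i j
      fin_cases i <;> fin_cases j <;>
        simp [huu, hff, huf, hfu, hu1, hf1]
    have hsp : Submodule.span ℝ (Set.range ![u, f]) = ⊤ := by
      apply Submodule.eq_top_of_finrank_eq
      rw [finrank_span_eq_card hon.linearIndependent]
      simp
    have hm : P - M ∈ Submodule.span ℝ ({u, f} : Set (EuclideanSpace ℝ (Fin 2))) := by
      rw [show ({u, f} : Set (EuclideanSpace ℝ (Fin 2))) = Set.range ![u, f] by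
        simp [Matrix.range_cons, Matrix.range_empty, Set.pair_comm]]
      rw [hsp]
      trivial
    obtain ⟨x, y, h⟩ := Submodule.mem_span_pair.1 hm
    exact ⟨x, y, h.symm⟩
  -- inner products of combinations
  have hinner : ∀ p q r t : ℝ, ⟪p • u + q • f, r • u + t • f⟫ = p * r + q * t := by
    intro p q r t
    simp only [inner_add_left, inner_add_right, real_inner_smul_left, real_inner_smul_right,
      huu, hff, huf, hfu]
    ring
  -- coordinate expressions of differences
  have hBP : B - P = (-(b/2) - x) • u + (s*b/2 - y) • f := by
    rw [show B - P = (B - M) - (P - M) by abel, hvBM, hxy]; match_scalars <;> ring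
  have hBC2 : B - C = ((c-b)/2) • u + (s*(b+c)/2) • f := by
    rw [show B - C = (B - M) - (C - M) by abel, hvBM, hwCM]; match_scalars <;> ring
  have hCP : C - P = (-(c/2) - x) • u + (-(s*c/2) - y) • f := by
    rw [show C - P = (C - M) - (P - M) by abel, hwCM, hxy]; match_scalars <;> ring
  -- squared distance equations
  have e1 : (-(b/2) - x) * (-(b/2) - x) + (s*b/2 - y) * (s*b/2 - y)
      = ((c-b)/2) * ((c-b)/2) + (s*(b+c)/2) * (s*(b+c)/2) := by
    have h := congrArg (fun z => z^2) hP1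
    simp only [dist_eq_norm] at h
    rw [← real_inner_self_eq_norm_sq, ← real_inner_self_eq_norm_sq, hBP, hBC2,
      hinner, hinner] at h
    linear_combination h
  have e2 : (-(c/2) - x) * (-(c/2) - x) + (-(s*c/2) - y) * (-(s*c/2) - y)
      = ((c-b)/2) * ((c-b)/2) + (s*(b+c)/2) * (s*(b+c)/2) := by
    have h := congrArg (fun z => z^2) hP2
    simp only [dist_eq_norm] at h
    rw [show B - C = -(C - B) by abel] at h
    rw [norm_neg] at h
    rw [show C - B = -(B - C) by abel] at h
    rw [norm_neg] at h
    rw [← real_inner_self_eq_norm_sq, ← real_inner_self_eq_norm_sq, hCP, hBC2,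
      hinner, hinner] at h
    linear_combination h
  -- reduced polynomial equations
  have q1 : x^2 + y^2 + x*b - s*y*b - b*c - c^2 = 0 := by
    linear_combination e1 + (((b+c)^2 - b^2)/4) * hs
  have q2 : x^2 + y^2 + x*c + s*y*c - b*c - b^2 = 0 := by
    linear_combination e2 + (((b+c)^2 - c^2)/4) * hs
  have hL : x*(b-c) - s*y*(b+c) + b^2 - c^2 = 0 := by linear_combination q1 - q2
  have hk : (0:ℝ) < 2*(b^2+b*c+c^2) := by positivity
  have hfact : (x+b+c)*(2*x-b-c) = 0 := by
    have hfact0 : 2*(b^2+b*c+c^2)*((x+b+c)*(2*x-b-c)) = 0 := by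
      linear_combination (3*(b+c)^2)*q1 + ((b-c)*x + s*(b+c)*y - (b+c)*(2*b+c))*hL
        + ((b+c)^2*y^2)*hs
    rcases mul_eq_zero.mp hfact0 with h | h
    · exact absurd h hk.ne'
    · exact h
  rcases mul_eq_zero.mp hfact with hcase | hcase
  · -- good case : x = -(b+c), y = 0, M on line AP
    have hy5 : y * (s*(b+c)) = 0 := by linear_combination (b-c)*hcase - hL
    have hsbc : s*(b+c) ≠ 0 := by positivity
    have hy : y = 0 := (mul_eq_zero.mp hy5).resolve_right hsbc
    have hx : x = -(b+c) := by linarith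
    have hPA : P -ᵥ A = (-(a+b+c)) • u := by
      rw [vsub_eq_sub, show P - A = (P - M) - (A - M) by abel, hxy, huAM, hx, hy]
      match_scalars <;> ring
    have habc : a + b + c ≠ 0 := by positivity
    have hM : (a/(a+b+c)) • (P -ᵥ A) +ᵥ A = M := by
      rw [hPA, vadd_eq_add, smul_smul,
        show a/(a+b+c) * -(a+b+c) = -a by field_simp, neg_smul, ← huAM]
      abel
    rw [← hM]
    exact smul_vsub_vadd_mem_affineSpan_pair _ _ _
  · -- impossible case : P on the same side as A
    exfalso
    have hx : x = (b+c)/2 := by linarith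
    have hsy : s*y*(b+c) = 3*(b-c)*(b+c)/2 := by
      linear_combination ((b-c)/2)*hcase - hL
    have hy : y = s*(b-c)/2 := by
      have h6 : (y - s*(b-c)/2) * (s*(b+c)) = 0 := by
        linear_combination hsy - ((b-c)*(b+c)/2)*hs
      have hsbc : s*(b+c) ≠ 0 := by positivity
      have h7 := (mul_eq_zero.mp h6).resolve_right hsbc
      linarith [sub_eq_zero.mp h7]
    obtain ⟨p, hp, hsb⟩ := hPs.exists_sbtw
    have hp' : (p -ᵥ B) +ᵥ B ∈ affineSpan ℝ ({B, C} : Set (EuclideanSpace ℝ (Fin 2))) := by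
      rwa [vsub_vadd]
    obtain ⟨t, ht⟩ := vadd_left_mem_affineSpan_pair.mp hp'
    obtain ⟨r1, r2, hr1, hr2, hr12, hcomb⟩ := hsb.wbtw.mem_segment
    set n : EuclideanSpace ℝ (Fin 2) := (s*(b+c)/2) • u + ((b-c)/2) • f with hn_def
    have hCB : C - B = ((b-c)/2) • u + (-(s*(b+c)/2)) • f := by
      rw [show C - B = (C - M) - (B - M) by abel, hvBM, hwCM]; match_scalars <;> ring
    have hpB : p - B = t • (C - B) := by
      simpa [vsub_eq_sub] using ht.symm
    have hsp : ⟪p - B, n⟫ = 0 := by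
      rw [hpB, real_inner_smul_left, hCB, hn_def, hinner]; ring
    have hAB2 : A - B = (a + b/2) • u + (-(s*b/2)) • f := by
      rw [show A - B = (A - M) - (B - M) by abel, huAM, hvBM]; match_scalars <;> ring
    have hPB : P - B = ((2*b+c)/2) • u + (-(s*c/2)) • f := by
      rw [show P - B = (P - M) - (B - M) by abel, hxy, hvBM, hx, hy]
      match_scalars <;> ring
    have hsA : ⟪A - B, n⟫ = s*(a*(b+c)+b*c)/2 := by rw [hAB2, hn_def, hinner]; ring
    have hsP : ⟪P - B, n⟫ = s*(b^2+b*c+c^2)/2 := by rw [hPB, hn_def, hinner]; ring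
    have hkey : p - B = r1 • (P - B) + r2 • (A - B) := by
      rw [← hcomb, show r2 = 1 - r1 by linarith]
      match_scalars <;> ring
    have h0' : (0:ℝ) = r1 * (s*(b^2+b*c+c^2)/2) + r2 * (s*(a*(b+c)+b*c)/2) := by
      have e := hsp
      rw [hkey, inner_add_left, real_inner_smul_left, real_inner_smul_left, hsA, hsP] at e
      linarith
    have hXpos : (0:ℝ) < s*(b^2+b*c+c^2)/2 := by positivity
    have hYpos : (0:ℝ) < s*(a*(b+c)+b*c)/2 := by positivity
    have hn1 : 0 ≤ r2 * (s*(a*(b+c)+b*c)/2) := mul_nonneg hr2 hYpos.le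
    have hn2 : 0 ≤ r1 * (s*(b^2+b*c+c^2)/2) := mul_nonneg hr1 hXpos.le
    have hr1X : r1 * (s*(b^2+b*c+c^2)/2) = 0 := by linarith
    have hr10 : r1 = 0 := (mul_eq_zero.mp hr1X).resolve_right hXpos.ne'
    have hr21 : r2 = 1 := by linarith
    rw [hr10, hr21] at h0'
    simp at h0'
    linarith

theorem fermat_point_concurrency (A B C M R P Q : EuclideanSpace ℝ (Fin 2))
    (hABC : AffineIndependent ℝ ![A, B, C])
    (hA : ∠ B A C < 2 * Real.pi / 3)
    (hB : ∠ A B C < 2 * Real.pi / 3)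
    (hC : ∠ B C A < 2 * Real.pi / 3)
    -- M is the Fermat point
    (hMint : M ∈ interior (convexHull ℝ {A, B, C}))
    (hM1 : ∠ A M B = 2 * Real.pi / 3) (hM2 : ∠ B M C = 2 * Real.pi / 3)
    (hM3 : ∠ C M A = 2 * Real.pi / 3)
    -- equilateral triangle ARB erected externally on side AB
    (hR1 : dist A R = dist A B) (hR2 : dist B R = dist A B)
    (hRside : (affineSpan ℝ ({A, B} : Set (EuclideanSpace ℝ (Fin 2)))).SOppSide R C)
    -- equilateral triangle BPC erected externally on side BC
    (hP1 : dist B P = dist B C) (hP2 : dist C P = dist B C)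
    (hPside : (affineSpan ℝ ({B, C} : Set (EuclideanSpace ℝ (Fin 2)))).SOppSide P A)
    -- equilateral triangle ACQ erected externally on side CA
    (hQ1 : dist A Q = dist C A) (hQ2 : dist C Q = dist C A)
    (hQside : (affineSpan ℝ ({C, A} : Set (EuclideanSpace ℝ (Fin 2)))).SOppSide Q B) :
    M ∈ affineSpan ℝ ({A, P} : Set (EuclideanSpace ℝ (Fin 2))) ∧
    M ∈ affineSpan ℝ ({B, Q} : Set (EuclideanSpace ℝ (Fin 2))) ∧
    M ∈ affineSpan ℝ ({C, R} : Set (EuclideanSpace ℝ (Fin 2))) := by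
  refine ⟨?_, ?_, ?_⟩
  · exact fermat_aux M A B C P hM1 hM2 hM3 hP1 hP2 hPside
  · exact fermat_aux M B C A Q hM2 hM3 hM1 hQ2 hQ1 hQside
  · exact fermat_aux M C A B R hM3 hM1 hM2 hR1 hR2 hRside
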